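/- Let H be an atomic monoid and u ∈ A(H) an atom. Then the tame degree satisfies t(H, uH^×) = sup{ d(x, Z(a) ∩ uH^×Z(H)) : a ∈ uH, x ∈ Z(a), A_a(M_H) ≠ ∅ }. -/

import Mathlib

open Multiset
open scoped Classical ENNReal

/-- The set of atoms (irreducible elements) of a reduced monoid `M`. -/
abbrev Atom (M : Type) [CancelCommMonoid M] : Type := {u : M // Irreducible u}

/-- The factorization homomorphism `π : Z(H) → H`, where the factorization monoid
`Z(H)` is realized as the free commutative monoid (multiset) over the atoms. -/
def fprod {M : Type} [CancelCommMonoid M] (z : Multiset (Atom M)) : M :=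
  (z.map Subtype.val).prod

/-- The set of factorizations `Z(a)` of `a`. -/
def Zf {M : Type} [CancelCommMonoid M] (a : M) : Set (Multiset (Atom M)) :=
  {z | fprod z = a}

/-- `M` is reduced: the only unit is `1`. -/
def Reduced (M : Type) [CancelCommMonoid M] : Prop := ∀ u : M, IsUnit u → u = 1

/-- `M` is atomic: every non-unit is a product of atoms. -/
def Atomic (M : Type) [CancelCommMonoid M] : Prop :=
  ∀ a : M, ¬ IsUnit a → ∃ z : Multiset (Atom M), fprod z = a

/-- The distance between two factorizations. -/
noncomputable def fdist {M : Type} [CancelCommMonoid M] (z z' : Multiset (Atom M)) : ℕ :=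
  max (card (z - z')) (card (z' - z))

/-- The catenary degree `c(a)`: the least `N` such that any two factorizations of `a`
can be concatenated by an `N`-chain of factorizations of `a`. -/
noncomputable def cat {M : Type} [CancelCommMonoid M] (a : M) : ℕ∞ :=
  sInf {N : ℕ∞ | ∀ z ∈ Zf a, ∀ z' ∈ Zf a,
    Relation.ReflTransGen (fun u v => v ∈ Zf a ∧ (fdist u v : ℕ∞) ≤ N) z z'}

/-- The catenary degree `c(H)`. -/
noncomputable def catH (M : Type) [CancelCommMonoid M] : ℕ∞ := ⨆ a : M, cat a

/-- The `R`-relation on factorizations of `a`: two factorizations are `R`-related if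
they can be joined by a chain of factorizations of `a` whose consecutive members have a
common atom (the degenerate case `z = z' = 1` is the reflexivity case). -/
def RRel {M : Type} [CancelCommMonoid M] (a : M) :
    Multiset (Atom M) → Multiset (Atom M) → Prop :=
  Relation.ReflTransGen (fun u v => u ∈ Zf a ∧ v ∈ Zf a ∧ u ∩ v ≠ 0)

/-- `|R_a| ≥ 2`: `a` has at least two `R`-equivalence classes of factorizations. -/
def TwoClasses {M : Type} [CancelCommMonoid M] (a : M) : Prop :=
  ∃ z ∈ Zf a, ∃ z' ∈ Zf a, ¬ RRel a z z'

/-- `μ(a)`: the supremum over the `R`-classes `ρ` of `Z(a)` of `min {|z| : z ∈ ρ}`. -/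
noncomputable def mu {M : Type} [CancelCommMonoid M] (a : M) : ℕ∞ :=
  ⨆ z ∈ Zf a, ⨅ w ∈ {w | w ∈ Zf a ∧ RRel a z w}, (card w : ℕ∞)

/-- `μ(H) = sup {μ(a) : a ∈ H, |R_a| ≥ 2}`. -/
noncomputable def muH (M : Type) [CancelCommMonoid M] : ℕ∞ :=
  ⨆ a : M, ⨆ (_ : TwoClasses a), mu a

/-- The monoid of relations `M_H ⊆ Z(H) × Z(H)`. -/
def MHset (M : Type) [CancelCommMonoid M] :
    Set (Multiset (Atom M) × Multiset (Atom M)) :=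
  {p | fprod p.1 = fprod p.2}

/-- Atoms of the (reduced) monoid of relations `M_H`. -/
def IsRelAtom {M : Type} [CancelCommMonoid M]
    (p : Multiset (Atom M) × Multiset (Atom M)) : Prop :=
  p ∈ MHset M ∧ p ≠ 0 ∧
    ∀ q r, q ∈ MHset M → r ∈ MHset M → p = q + r → q = 0 ∨ r = 0

/-- `A_a(M_H) ≠ ∅`: there is an atom of `M_H` over `a`. -/
def HasRelAtom {M : Type} [CancelCommMonoid M] (a : M) : Prop :=
  ∃ p : Multiset (Atom M) × Multiset (Atom M), IsRelAtom p ∧ fprod p.1 = a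

/-- The tame degree `t(a, u)` with respect to an atom `u`: the least `N` such that
whenever `a` has a factorization divisible by `u`, every factorization `z` of `a` admits
a factorization `z'` of `a` divisible by `u` with `d(z, z') ≤ N`. -/
noncomputable def tame {M : Type} [CancelCommMonoid M] (a : M) (u : Atom M) : ℕ∞ :=
  sInf {N : ℕ∞ | (∃ z ∈ Zf a, u ∈ z) →
    ∀ z ∈ Zf a, ∃ z' ∈ Zf a, u ∈ z' ∧ (fdist z z' : ℕ∞) ≤ N}

section Auxiliary

variable {M : Type} [CancelCommMonoid M]

lemma fprod_add' (x y : Multiset (Atom M)) : fprod (x + y) = fprod x * fprod y := by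
  simp [fprod]

lemma fprod_cons' (v : Atom M) (x : Multiset (Atom M)) : fprod (v ::ₘ x) = v.1 * fprod x := by
  simp [fprod]

lemma sum_snd' (L : Multiset (Multiset (Atom M) × Multiset (Atom M))) :
    L.sum.2 = (L.map Prod.snd).sum := by
  induction L using Multiset.induction with
  | empty => simp
  | cons a s ih => simp [ih]

lemma mem_msum' {a : Atom M} {L : Multiset (Multiset (Atom M))} (h : a ∈ L.sum) :
    ∃ s ∈ L, a ∈ s := by
  induction L using Multiset.induction with
  | empty => simp at h
  | cons b s ih =>
    rw [Multiset.sum_cons, Multiset.mem_add] at h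
    rcases h with h | h
    · exact ⟨b, Multiset.mem_cons_self _ _, h⟩
    · obtain ⟨t, ht, hat⟩ := ih h
      exact ⟨t, Multiset.mem_cons_of_mem ht, hat⟩

lemma pair_ne_zero' {q : Multiset (Atom M) × Multiset (Atom M)} (h : q ≠ 0) :
    1 ≤ card q.1 + card q.2 := by
  by_contra hc
  push_neg at hc
  have h1 : card q.1 = 0 ∧ card q.2 = 0 := by omega
  exact h (Prod.ext (card_eq_zero.mp h1.1) (card_eq_zero.mp h1.2))

/-- The monoid of relations is atomic. -/
lemma rel_atomic_aux : ∀ (n : ℕ) (p : Multiset (Atom M) × Multiset (Atom M)),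
    p ∈ MHset M → card p.1 + card p.2 ≤ n →
    ∃ L : Multiset (Multiset (Atom M) × Multiset (Atom M)),
      (∀ q ∈ L, IsRelAtom q) ∧ L.sum = p := by
  intro n
  induction n with
  | zero =>
    intro p hp hc
    have h1 : card p.1 = 0 ∧ card p.2 = 0 := by omega
    have hp0 : p = 0 := Prod.ext (card_eq_zero.mp h1.1) (card_eq_zero.mp h1.2)
    exact ⟨0, by simp, by simp [hp0]⟩
  | succ n ih =>
    intro p hp hc
    by_cases h0 : p = 0
    · exact ⟨0, by simp, by simp [h0]⟩
    by_cases hA : IsRelAtom p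
    · exact ⟨{p}, by simpa using hA, by simp⟩
    · have hdec : ∃ q r, q ∈ MHset M ∧ r ∈ MHset M ∧ p = q + r ∧ q ≠ 0 ∧ r ≠ 0 := by
        simp only [IsRelAtom, not_and] at hA
        have := hA hp h0
        push_neg at this
        obtain ⟨q, r, hq, hr, heq, hq0, hr0⟩ := this
        exact ⟨q, r, hq, hr, heq, hq0, hr0⟩
      obtain ⟨q, r, hq, hr, heq, hq0, hr0⟩ := hdec
      have hcq := pair_ne_zero' hq0
      have hcr := pair_ne_zero' hr0
      have hadd1 : card p.1 = card q.1 + card r.1 := by rw [heq]; simp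
      have hadd2 : card p.2 = card q.2 + card r.2 := by rw [heq]; simp
      obtain ⟨L1, hL1, hs1⟩ := ih q hq (by omega)
      obtain ⟨L2, hL2, hs2⟩ := ih r hr (by omega)
      refine ⟨L1 + L2, ?_, ?_⟩
      · intro x hx
        rcases Multiset.mem_add.mp hx with h | h
        · exact hL1 x h
        · exact hL2 x h
      · rw [Multiset.sum_add, hs1, hs2, heq]

lemma exists_fdist_min (x : Multiset (Atom M)) {S : Set (Multiset (Atom M))}
    (hS : S.Nonempty) : ∃ v ∈ S, ∀ w ∈ S, fdist x v ≤ fdist x w := by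
  classical
  obtain ⟨w0, hw0⟩ := hS
  have hP : ∃ n, ∃ v ∈ S, fdist x v = n := ⟨_, w0, hw0, rfl⟩
  obtain ⟨v, hv, hveq⟩ := Nat.find_spec hP
  refine ⟨v, hv, fun w hw => ?_⟩
  rw [hveq]
  exact Nat.find_min' hP ⟨w, hw, rfl⟩

lemma fdist_self' (z : Multiset (Atom M)) : fdist z z = 0 := by
  simp [fdist]

lemma fdist_add_left' (w x y : Multiset (Atom M)) : fdist (w + x) (w + y) = fdist x y := by
  have h1 : (w + x) - (w + y) = x - y := by
    ext a; simp only [Multiset.count_sub, Multiset.count_add]; omega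
  have h2 : (w + y) - (w + x) = y - x := by
    ext a; simp only [Multiset.count_sub, Multiset.count_add]; omega
  simp [fdist, h1, h2]

end Auxiliary

/-- **Theorem 4.10.1.** For an atom `u` of `H`,
`t(H, u) = sup {d(x, Z(a) ∩ uZ(H)) : a ∈ uH, x ∈ Z(a), A_a(M_H) ≠ ∅}`. -/
theorem tame_eq_sup (M : Type) [CancelCommMonoid M]
    (hred : Reduced M) (hat : Atomic M) (u : Atom M) :
    (⨆ a : M, tame a u) =
      ⨆ a : M, ⨆ (_ : (∃ b : M, a = u.1 * b) ∧ HasRelAtom a),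
        ⨆ z ∈ Zf a, ⨅ z' ∈ {w | w ∈ Zf a ∧ u ∈ w}, (fdist z z' : ℕ∞) := by
  apply le_antisymm
  · -- LHS ≤ RHS
    apply iSup_le
    intro a
    by_cases hex : ∃ z ∈ Zf a, u ∈ z
    · apply sInf_le
      simp only [Set.mem_setOf_eq]
      intro _ z hz
      obtain ⟨z0, hz0, hu0⟩ := hex
      by_cases huz : u ∈ z
      · exact ⟨z, hz, huz, by simp [fdist_self']⟩
      · -- the main argument: decompose the relation (z, z0) into atoms of M_H
        have hrel : (z, z0) ∈ MHset M := by
          show fprod z = fprod z0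
          rw [show fprod z = a from hz, show fprod z0 = a from hz0]
        obtain ⟨L, hL, hsum⟩ :=
          rel_atomic_aux (card z + card z0) (z, z0) hrel le_rfl
        have humem : u ∈ (L.map Prod.snd).sum := by
          rw [← sum_snd', hsum]; exact hu0
        obtain ⟨s, hsL, hus⟩ := mem_msum' humem
        obtain ⟨q, hqL, rfl⟩ := Multiset.mem_map.mp hsL
        have hq := hL q hqL
        have hq12 : fprod q.1 = fprod q.2 := hq.1
        have hq1le : q.1 ≤ z := by
          have h1 : L.sum = q + (L.erase q).sum := by
            rw [← Multiset.sum_cons, Multiset.cons_erase hqL]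
          have h2 : (L.sum).1 = z := congrArg Prod.fst hsum
          rw [h1] at h2
          have h3 : q.1 + ((L.erase q).sum).1 = z := h2
          rw [← h3]
          exact Multiset.le_add_right _ _
        have hSne : q.2 ∈ {w | w ∈ Zf (fprod q.1) ∧ u ∈ w} := ⟨hq12.symm, hus⟩
        obtain ⟨v, hv, hvmin⟩ := exists_fdist_min q.1 ⟨q.2, hSne⟩
        refine ⟨z - q.1 + v, ?_, Multiset.mem_add.mpr (Or.inr hv.2), ?_⟩
        · show fprod (z - q.1 + v) = a
          rw [fprod_add', show fprod v = fprod q.1 from hv.1, ← fprod_add',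
            tsub_add_cancel_of_le hq1le]
          exact hz
        · have key := fdist_add_left' (z - q.1) q.1 v
          rw [tsub_add_cancel_of_le hq1le] at key
          rw [key]
          have hPb : (∃ c : M, fprod q.1 = u.1 * c) ∧ HasRelAtom (fprod q.1) := by
            constructor
            · refine ⟨fprod (q.2.erase u), ?_⟩
              have h5 : fprod q.2 = u.1 * fprod (q.2.erase u) := by
                conv_lhs => rw [← Multiset.cons_erase hus]
                rw [fprod_cons']
              exact hq12.trans h5
            · exact ⟨q, hq, rfl⟩
          calc (fdist q.1 v : ℕ∞)
              ≤ ⨅ z' ∈ {w | w ∈ Zf (fprod q.1) ∧ u ∈ w}, (fdist q.1 z' : ℕ∞) :=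
                le_iInf₂ fun w hw => by exact_mod_cast hvmin w hw
            _ ≤ ⨆ x ∈ Zf (fprod q.1), ⨅ z' ∈ {w | w ∈ Zf (fprod q.1) ∧ u ∈ w},
                  (fdist x z' : ℕ∞) :=
                le_iSup₂ (f := fun x (_ : x ∈ Zf (fprod q.1)) =>
                  ⨅ z' ∈ {w | w ∈ Zf (fprod q.1) ∧ u ∈ w}, (fdist x z' : ℕ∞)) q.1 rfl
            _ ≤ _ := by
                apply le_iSup_of_le (fprod q.1)
                apply le_iSup_of_le hPb
                exact le_rfl
    · refine le_trans (sInf_le ?_) _root_.zero_le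
      simp only [Set.mem_setOf_eq]
      intro h
      exact absurd h hex
  · -- RHS ≤ LHS
    apply iSup_le
    intro a
    apply iSup_le
    intro ha
    apply iSup₂_le
    intro z hz
    refine le_trans ?_ (le_iSup (fun a => tame a u) a)
    apply le_sInf
    intro N hN
    have hz0 : ∃ z0 ∈ Zf a, u ∈ z0 := by
      obtain ⟨⟨c, hc⟩, -⟩ := ha
      by_cases hcu : IsUnit c
      · rw [hred c hcu, mul_one] at hc
        exact ⟨{u}, show fprod {u} = a by simp [fprod, hc],
          Multiset.mem_singleton_self u⟩
      · obtain ⟨w, hw⟩ := hat c hcu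
        exact ⟨u ::ₘ w, show fprod (u ::ₘ w) = a by rw [fprod_cons', hw, ← hc],
          Multiset.mem_cons_self u w⟩
    obtain ⟨z', hz', hu', hd⟩ := hN hz0 z hz
    exact le_trans (iInf₂_le z' ⟨hz', hu'⟩) hd
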